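/- Define M_{n,1}(p,y) for 0 ≤ y < p by M_{1,1}(p,y) = p/2 and M_{n,1}(p,y) = ∫_y^p M_{1,1}(a,y) M_{n-1,1}(p,a) da for n ≥ 2. Then for every n ≥ 1, M_{n,1}(p,y) = (2p/(4ⁿ (n-1)!)) (p² - y²)^{n-1}. -/

import Mathlib

open Real MeasureTheory intervalIntegral Set Filter Topology

/-- The limiting (`α = 1`) kernels: `M_{1,1}(p,y) = p/2` and
`M_{n,1}(p,y) = ∫_y^p M_{1,1}(a,y) M_{n-1,1}(p,a) da` for `n ≥ 2`
(`MkerOne 0 := 0` is unused). -/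
noncomputable def MkerOne : ℕ → ℝ → ℝ → ℝ
  | 0 => fun _ _ => 0
  | 1 => fun p _ => p / 2
  | (n+2) => fun p y => ∫ a in y..p, (a / 2) * MkerOne (n+1) p a

lemma key_integral (n : ℕ) (y p : ℝ) :
    ∫ a in y..p, a * (p ^ 2 - a ^ 2) ^ n
      = (p ^ 2 - y ^ 2) ^ (n + 1) / (2 * (n + 1)) := by
  have hd : ∀ a ∈ Set.uIcc y p,
      HasDerivAt (fun a : ℝ => -(p ^ 2 - a ^ 2) ^ (n + 1) / (2 * (n + 1)))
        (a * (p ^ 2 - a ^ 2) ^ n) a := by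
    intro a _
    have h1 : HasDerivAt (fun a : ℝ => p ^ 2 - a ^ 2) (-(2 * a ^ 1)) a :=
      (hasDerivAt_pow 2 a).const_sub _
    have h2 := ((h1.fun_pow (n + 1)).fun_neg.div_const (2 * (n + 1)))
    refine h2.congr_deriv ?_
    have : ((n : ℝ) + 1) ≠ 0 := by positivity
    rw [Nat.add_sub_cancel]
    push_cast
    field_simp
  rw [intervalIntegral.integral_eq_sub_of_hasDerivAt hd (by
    apply Continuous.intervalIntegrable
    continuity)]
  have h0 : p ^ 2 - p ^ 2 = 0 := by ring
  rw [h0, zero_pow (Nat.succ_ne_zero n)]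
  ring

/-- For every `n ≥ 1` and `0 ≤ y < p`,
`M_{n,1}(p,y) = (2p/(4ⁿ (n-1)!)) (p² - y²)^{n-1}`. -/
theorem stmt11 :
    ∀ n : ℕ, 1 ≤ n → ∀ p y : ℝ, 0 ≤ y → y < p →
      MkerOne n p y =
        2 * p / (4 ^ n * (Nat.factorial (n - 1))) * (p ^ 2 - y ^ 2) ^ (n - 1) := by
  have main : ∀ n : ℕ, ∀ p y : ℝ, 0 ≤ y → y < p →
      MkerOne (n + 1) p y =
        2 * p / (4 ^ (n + 1) * (Nat.factorial n)) * (p ^ 2 - y ^ 2) ^ n := by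
    intro n
    induction n with
    | zero =>
      intro p y _ _
      simp [MkerOne]
      ring
    | succ n ih =>
      intro p y hy hyp
      show (∫ a in y..p, (a / 2) * MkerOne (n + 1) p a) = _
      have hcong : (∫ a in y..p, (a / 2) * MkerOne (n + 1) p a)
          = ∫ a in y..p,
              (a / 2) * (2 * p / (4 ^ (n + 1) * (Nat.factorial n)) * (p ^ 2 - a ^ 2) ^ n) := by
        apply intervalIntegral.integral_congr_ae
        have hne : ∀ᵐ a : ℝ, a ≠ p := by
          have : (volume : Measure ℝ) {p} = 0 := measure_singleton p
          exact (ae_iff.2 (by simpa using this))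
        filter_upwards [hne] with a hane ha
        rw [Set.uIoc_of_le hyp.le] at ha
        have ha0 : 0 ≤ a := le_of_lt (lt_of_le_of_lt hy ha.1)
        have hap : a < p := lt_of_le_of_ne ha.2 hane
        rw [ih p a ha0 hap]
      rw [hcong]
      have : (∫ a in y..p,
          (a / 2) * (2 * p / (4 ^ (n + 1) * (Nat.factorial n)) * (p ^ 2 - a ^ 2) ^ n))
          = (p / (4 ^ (n + 1) * (Nat.factorial n))) *
            ∫ a in y..p, a * (p ^ 2 - a ^ 2) ^ n := by
        rw [← intervalIntegral.integral_const_mul]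
        congr 1
        ext a
        ring
      rw [this, key_integral]
      have hfac : (Nat.factorial (n + 1) : ℝ) = (n + 1) * Nat.factorial n := by
        rw [Nat.factorial_succ]; push_cast; ring
      have h4 : (4 : ℝ) ^ (n + 1) ≠ 0 := by positivity
      have hn1 : ((n : ℝ) + 1) ≠ 0 := by positivity
      have hfn : (Nat.factorial n : ℝ) ≠ 0 := by positivity
      rw [show n + 1 + 1 = n + 2 from rfl] at *
      rw [hfac]
      field_simp
      ring
  intro n hn p y hy hyp
  obtain ⟨m, rfl⟩ := Nat.exists_eq_add_of_le hn
  rw [Nat.add_comm 1 m]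
  simpa using main m p y hy hyp
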